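/- Let k be a field, A a finitely generated commutative k-algebra, and M a finitely generated A-module. For each maximal ideal m of A let M_m denote the localization of M at m, and let (M_m)° ⊆ (M_m)* be the space of k-linear functionals on M_m whose kernel contains an A_m-submodule of finite k-codimension. Then the k-linear map ⊕_{m ∈ maxSpec A} (M_m)° → M*, sending a family (φ_m) (almost all zero) to Σ_m φ_m ∘ λ_m, where λ_m : M → M_m is the localization map, is injective and its image is exactly M° = {φ ∈ M* : ker φ contains an A-submodule of finite k-codimension}. Moreover this bijection is A-linear for the actions (a·φ)(x) = φ(a x). -/

import Mathlib

universe u v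

section

variable {k : Type u} {A : Type v} [Field k] [CommRing A] [Algebra k A]

/-- The `k`-module structure on a localized module of an `A`-module, obtained by restriction
of scalars along `k → A`. -/
noncomputable instance LocalizedModule.moduleBase (M : Type v) [AddCommGroup M] [Module A M]
    (S : Submonoid A) : Module k (LocalizedModule S M) :=
  Module.compHom _ (algebraMap k A)

instance LocalizedModule.isScalarTowerBase (M : Type v) [AddCommGroup M] [Module A M]
    (S : Submonoid A) : IsScalarTower k A (LocalizedModule S M) :=
  ⟨fun c a x => by
    show (c • a) • x = (algebraMap k A c) • (a • x)
    rw [Algebra.smul_def, mul_smul]⟩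

/-- `φ` belongs to the finite dual `N°` of the `A`-module `N`: the kernel of the `k`-linear
functional `φ` contains an `A`-submodule of finite `k`-codimension. -/
def MemFiniteDual (N : Type*) [AddCommGroup N] [Module k N] [Module A N]
    [IsScalarTower k A N] (φ : N →ₗ[k] k) : Prop :=
  ∃ P : Submodule A N, (∀ x ∈ P, φ x = 0) ∧ FiniteDimensional k (N ⧸ P.restrictScalars k)

end

section AuxInst

variable {k : Type u} {A : Type v} [Field k] [CommRing A] [Algebra k A]

instance LocalizedModule.isScalarTowerBaseSelf (M : Type v) [AddCommGroup M] [Module A M]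
    (S : Submonoid A) : IsScalarTower k k (LocalizedModule S M) :=
  IsScalarTower.of_algebraMap_smul (fun _ _ => rfl)

instance LocalizedModule.isScalarTowerBaseSelfQuot (M : Type v) [AddCommGroup M] [Module A M]
    (S : Submonoid A) (P : Submodule A (LocalizedModule S M)) :
    IsScalarTower k k (LocalizedModule S M ⧸ P) :=
  IsScalarTower.of_algebraMap_smul (fun _ _ => rfl)

end AuxInst

section Aux

variable {k : Type u} {A : Type v} [Field k] [CommRing A] [Algebra k A]

/-- Quotient by the intersection of two finite-codimension subspaces. -/
lemma aux_fd_inf {N : Type*} [AddCommGroup N] [Module k N] (P P' : Submodule k N)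
    (h : FiniteDimensional k (N ⧸ P)) (h' : FiniteDimensional k (N ⧸ P')) :
    FiniteDimensional k (N ⧸ (P ⊓ P')) := by
  have e := (P.mkQ.prod P'.mkQ).quotKerEquivRange
  rw [LinearMap.ker_prod, Submodule.ker_mkQ, Submodule.ker_mkQ] at e
  exact e.symm.finiteDimensional

lemma aux_fd_finsetInf {N : Type*} [AddCommGroup N] [Module k N] {ι : Type*}
    [DecidableEq ι] (s : Finset ι) (P : ι → Submodule k N)
    (h : ∀ i ∈ s, FiniteDimensional k (N ⧸ P i)) :
    FiniteDimensional k (N ⧸ s.inf P) := by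
  classical
  induction s using Finset.induction_on with
  | empty =>
      rw [Finset.inf_empty]
      have : Subsingleton (N ⧸ (⊤ : Submodule k N)) :=
        Submodule.Quotient.subsingleton_iff.2 rfl
      exact Module.Finite.of_surjective (0 : k →ₗ[k] _)
        (fun y => ⟨0, Subsingleton.elim _ _⟩)
  | @insert a s ha ih =>
      rw [Finset.inf_insert]
      exact aux_fd_inf _ _ (h a (Finset.mem_insert_self a s))
        (ih fun i hi => h i (Finset.mem_insert_of_mem hi))

lemma aux_fd_comap {V W : Type*} [AddCommGroup V] [Module k V] [AddCommGroup W] [Module k W]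
    (f : V →ₗ[k] W) (P : Submodule k W) (h : FiniteDimensional k (W ⧸ P)) :
    FiniteDimensional k (V ⧸ P.comap f) := by
  have e := (P.mkQ.comp f).quotKerEquivRange
  rw [LinearMap.ker_comp, Submodule.ker_mkQ] at e
  exact e.symm.finiteDimensional

lemma MemFiniteDual.zero {N : Type*} [AddCommGroup N] [Module k N] [Module A N]
    [IsScalarTower k A N] : MemFiniteDual (A := A) N (0 : N →ₗ[k] k) := by
  refine ⟨⊤, fun x _ => rfl, ?_⟩
  have : (⊤ : Submodule A N).restrictScalars k = ⊤ := rfl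
  rw [this]
  have : Subsingleton (N ⧸ (⊤ : Submodule k N)) :=
    Submodule.Quotient.subsingleton_iff.2 rfl
  exact Module.Finite.of_surjective (0 : k →ₗ[k] _) (fun y => ⟨0, Subsingleton.elim _ _⟩)

lemma MemFiniteDual.sub {N : Type*} [AddCommGroup N] [Module k N] [Module A N]
    [IsScalarTower k A N] {φ φ' : N →ₗ[k] k} (h : MemFiniteDual (A := A) N φ)
    (h' : MemFiniteDual (A := A) N φ') : MemFiniteDual (A := A) N (φ - φ') := by
  obtain ⟨P, hP0, hPf⟩ := h
  obtain ⟨P', hP0', hPf'⟩ := h'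
  refine ⟨P ⊓ P', fun x hx => ?_, ?_⟩
  · simp [hP0 x hx.1, hP0' x hx.2]
  · have : (P ⊓ P').restrictScalars k = P.restrictScalars k ⊓ P'.restrictScalars k := rfl
    rw [this]
    exact aux_fd_inf _ _ hPf hPf'

end Aux

section Aux2

variable {k : Type u} {A : Type v} [Field k] [CommRing A] [Algebra k A]

/-- Nakayama-type lemma: a finite-dimensional module on which the complement of a maximal
ideal acts injectively is killed by a power of that maximal ideal. -/
lemma aux_pow_ann {N : Type*} [AddCommGroup N] [Module k N] [Module A N]
    [IsScalarTower k A N] [FiniteDimensional k N] (m : MaximalSpectrum A)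
    (hinj : ∀ s ∈ m.asIdeal.primeCompl, Function.Injective fun n : N => s • n) :
    ∃ e : ℕ, ∀ a ∈ m.asIdeal ^ e, ∀ n : N, a • n = 0 := by
  haveI : IsArtinian A N := isArtinian_of_tower k inferInstance
  haveI : IsNoetherian A N := isNoetherian_of_tower k inferInstance
  have hmono : ∀ i j : ℕ, i ≤ j → m.asIdeal ^ j • (⊤ : Submodule A N) ≤ m.asIdeal ^ i • ⊤ :=
    fun i j hij => Submodule.smul_mono_left (Ideal.pow_le_pow_right hij)
  obtain ⟨n₀, hn₀⟩ := IsArtinian.monotone_stabilizes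
    (⟨fun i => m.asIdeal ^ i • (⊤ : Submodule A N), fun i j hij => hmono i j hij⟩ :
      ℕ →o (Submodule A N)ᵒᵈ)
  have h1 : m.asIdeal ^ (n₀ + 1) • (⊤ : Submodule A N) = m.asIdeal ^ n₀ • ⊤ :=
    (hn₀ (n₀ + 1) (Nat.le_succ _)).symm
  have hle : m.asIdeal ^ n₀ • (⊤ : Submodule A N) ≤
      m.asIdeal • (m.asIdeal ^ n₀ • (⊤ : Submodule A N)) := by
    rw [← Submodule.smul_assoc, smul_eq_mul, ← pow_succ', h1]
  obtain ⟨r, hr1, hr0⟩ :=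
    Submodule.exists_sub_one_mem_and_smul_eq_zero_of_fg_of_le_smul m.asIdeal
      (m.asIdeal ^ n₀ • ⊤) (IsNoetherian.noetherian _) hle
  have hrc : r ∈ m.asIdeal.primeCompl := by
    intro hr
    have h2 : (1 : A) ∈ m.asIdeal := by
      have := m.asIdeal.sub_mem hr hr1; simpa using this
    exact m.2.ne_top ((Ideal.eq_top_iff_one _).2 h2)
  have hQ'bot : m.asIdeal ^ n₀ • (⊤ : Submodule A N) = ⊥ := by
    rw [eq_bot_iff]
    intro n hn
    have : r • n = r • 0 := by rw [smul_zero]; exact hr0 n hn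
    simpa using hinj r hrc this
  exact ⟨n₀, fun a ha n => by
    have hm : a • n ∈ m.asIdeal ^ n₀ • (⊤ : Submodule A N) :=
      Submodule.smul_mem_smul ha Submodule.mem_top
    rw [hQ'bot] at hm
    simpa using hm⟩

end Aux2

section Aux3

variable {k : Type u} {A : Type v} [Field k] [CommRing A] [Algebra k A]
variable {M : Type v} [AddCommGroup M] [Module k M] [Module A M] [IsScalarTower k A M]

lemma aux_loc_facts (m : MaximalSpectrum A)
    (P : Submodule A (LocalizedModule m.asIdeal.primeCompl M))
    (hfd : FiniteDimensional k
      ((LocalizedModule m.asIdeal.primeCompl M) ⧸ P.restrictScalars k)) :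
    (∃ e : ℕ, ∀ a ∈ m.asIdeal ^ e,
      ∀ y : LocalizedModule m.asIdeal.primeCompl M, a • y ∈ P) ∧
    (∀ y : LocalizedModule m.asIdeal.primeCompl M,
      ∃ x : M, y - LocalizedModule.mkLinearMap m.asIdeal.primeCompl M x ∈ P) := by
  haveI : FiniteDimensional k (LocalizedModule m.asIdeal.primeCompl M ⧸ P) :=
    (Submodule.Quotient.restrictScalarsEquiv k P).finiteDimensional
  have hsurj : ∀ s ∈ m.asIdeal.primeCompl,
      Function.Surjective fun q : LocalizedModule m.asIdeal.primeCompl M ⧸ P => s • q := by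
    intro s hs q
    obtain ⟨y, rfl⟩ := Submodule.Quotient.mk_surjective P q
    have hu := IsLocalizedModule.map_units
      (LocalizedModule.mkLinearMap m.asIdeal.primeCompl M) ⟨s, hs⟩
    obtain ⟨z, hz⟩ := ((Module.End.isUnit_iff _).1 hu).2 y
    refine ⟨Submodule.Quotient.mk z, ?_⟩
    rw [Module.algebraMap_end_apply] at hz
    show s • (Submodule.Quotient.mk z : LocalizedModule m.asIdeal.primeCompl M ⧸ P) = _
    rw [← Submodule.Quotient.mk_smul, hz]
  have hinj : ∀ s ∈ m.asIdeal.primeCompl,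
      Function.Injective fun q : LocalizedModule m.asIdeal.primeCompl M ⧸ P => s • q := by
    intro s hs
    have h2 : Function.Injective
        (Algebra.lsmul k k (LocalizedModule m.asIdeal.primeCompl M ⧸ P) s) :=
      (LinearMap.injective_iff_surjective (K := k)
        (f := Algebra.lsmul k k (LocalizedModule m.asIdeal.primeCompl M ⧸ P) s)).2
        (hsurj s hs)
    exact h2
  constructor
  · obtain ⟨e, he⟩ :=
      aux_pow_ann (k := k) (N := LocalizedModule m.asIdeal.primeCompl M ⧸ P) m hinj
    refine ⟨e, fun a ha y => ?_⟩
    have := he a ha (Submodule.Quotient.mk y)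
    rwa [← Submodule.Quotient.mk_smul, Submodule.Quotient.mk_eq_zero] at this
  · have key : ∀ s ∈ m.asIdeal.primeCompl, ∀ q : LocalizedModule m.asIdeal.primeCompl M ⧸ P,
        s • q ∈ LinearMap.range (P.mkQ ∘ₗ LocalizedModule.mkLinearMap m.asIdeal.primeCompl M) →
        q ∈ LinearMap.range (P.mkQ ∘ₗ LocalizedModule.mkLinearMap m.asIdeal.primeCompl M) := by
      intro s hs q hq
      set R' := LinearMap.range (P.mkQ ∘ₗ LocalizedModule.mkLinearMap m.asIdeal.primeCompl M)
      have hmem : ∀ x ∈ R'.restrictScalars k,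
          Algebra.lsmul k k (LocalizedModule m.asIdeal.primeCompl M ⧸ P) s x ∈
            R'.restrictScalars k := fun x hx => R'.smul_mem s hx
      have τinj : Function.Injective
          ((Algebra.lsmul k k (LocalizedModule m.asIdeal.primeCompl M ⧸ P) s).restrict hmem) := by
        intro x y hxy
        have h3 : s • (x : LocalizedModule m.asIdeal.primeCompl M ⧸ P) = s • (y : _) :=
          congrArg Subtype.val hxy
        exact Subtype.ext (hinj s hs h3)
      have τsurj := (LinearMap.injective_iff_surjective (K := k)
        (f := (Algebra.lsmul k k (LocalizedModule m.asIdeal.primeCompl M ⧸ P) s).restrict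
          hmem)).1 τinj
      obtain ⟨x, hx⟩ := τsurj ⟨s • q, hq⟩
      have h4 : s • (x : LocalizedModule m.asIdeal.primeCompl M ⧸ P) = s • q :=
        congrArg Subtype.val hx
      have h5 := hinj s hs h4
      rw [← h5]
      exact x.2
    have hmk : ∀ y : LocalizedModule m.asIdeal.primeCompl M, P.mkQ y ∈
        LinearMap.range (P.mkQ ∘ₗ LocalizedModule.mkLinearMap m.asIdeal.primeCompl M) := by
      intro y
      induction y using LocalizedModule.induction_on with
      | _ x s =>
        apply key s s.2
        have h1 : (s : A) • LocalizedModule.mk x s =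
            LocalizedModule.mkLinearMap m.asIdeal.primeCompl M x := by
          rw [LocalizedModule.mkLinearMap_apply, LocalizedModule.smul'_mk,
            ← Submonoid.smul_def, LocalizedModule.mk_cancel]
        rw [← map_smul, h1]
        exact ⟨x, rfl⟩
    intro y
    obtain ⟨x, hx⟩ := hmk y
    refine ⟨x, ?_⟩
    rw [← Submodule.Quotient.eq]
    simp only [LinearMap.coe_comp, Function.comp_apply, Submodule.mkQ_apply] at hx
    exact hx.symm

end Aux3

section Aux4

variable {k : Type u} {A : Type v} [Field k] [CommRing A] [Algebra k A]
variable {M : Type v} [AddCommGroup M] [Module k M] [Module A M] [IsScalarTower k A M]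

/-- Intersection of a finite family of pairwise coprime ideals is contained in the product. -/
lemma aux_inf_le_prod {ι : Type*} [DecidableEq ι] (s : Finset ι) (f : ι → Ideal A)
    (h : ∀ i ∈ s, ∀ j ∈ s, i ≠ j → IsCoprime (f i) (f j)) :
    s.inf f ≤ ∏ i ∈ s, f i := by
  classical
  induction s using Finset.induction_on with
  | empty => simp
  | @insert a s ha ih =>
    rw [Finset.prod_insert ha, Finset.inf_insert]
    have hc : IsCoprime (f a) (∏ i ∈ s, f i) :=
      IsCoprime.prod_right fun i hi =>
        h a (Finset.mem_insert_self a s) i (Finset.mem_insert_of_mem hi)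
          (fun hai => ha (hai ▸ hi))
    calc f a ⊓ s.inf f ≤ f a ⊓ ∏ i ∈ s, f i := by
          exact inf_le_inf_left _ (ih fun i hi j hj hij =>
            h i (Finset.mem_insert_of_mem hi) j (Finset.mem_insert_of_mem hj) hij)
      _ = f a * ∏ i ∈ s, f i := Ideal.inf_eq_mul_of_isCoprime hc

/-- Core injectivity: an admissible family summing to zero on `M` is zero. -/
lemma aux_core_inj (T : Finset (MaximalSpectrum A))
    (φ : ∀ m : MaximalSpectrum A, (LocalizedModule m.asIdeal.primeCompl M) →ₗ[k] k)
    (hfd : ∀ m, MemFiniteDual (A := A) (LocalizedModule m.asIdeal.primeCompl M) (φ m))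
    (hsupp : ∀ m ∉ T, φ m = 0)
    (hsum : ∀ x : M, ∑ m ∈ T, φ m (LocalizedModule.mkLinearMap m.asIdeal.primeCompl M x) = 0)
    (m0 : MaximalSpectrum A) : φ m0 = 0 := by
  classical
  by_cases hm0 : m0 ∈ T
  · choose P hP0 hPfd using hfd
    have hfacts := fun m => aux_loc_facts (k := k) m (P m) (hPfd m)
    choose e he using fun m => (hfacts m).1
    have hsur := fun m => (hfacts m).2
    -- choose an element v ≡ 1 mod m0^e, v ∈ m'^e for other m' ∈ T
    have hc : IsCoprime (m0.asIdeal ^ e m0) (∏ m' ∈ T.erase m0, m'.asIdeal ^ e m') := by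
      refine IsCoprime.prod_right fun m' hm' => ?_
      have hne : m0.asIdeal ≠ m'.asIdeal := by
        intro hEq
        exact (Finset.mem_erase.1 hm').1 (MaximalSpectrum.ext hEq.symm)
      exact (Ideal.isCoprime_iff_sup_eq.2 (Ideal.IsMaximal.coprime_of_ne m0.2 m'.2 hne)).pow
    have hsup : m0.asIdeal ^ e m0 ⊔ ∏ m' ∈ T.erase m0, m'.asIdeal ^ e m' = ⊤ :=
      Ideal.isCoprime_iff_sup_eq.1 hc
    obtain ⟨u, hu, v, hv, huv⟩ := Submodule.mem_sup.1 (hsup ▸ Submodule.mem_top :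
      (1 : A) ∈ m0.asIdeal ^ e m0 ⊔ ∏ m' ∈ T.erase m0, m'.asIdeal ^ e m')
    -- φ m0 vanishes on the image of M
    have hφmk : ∀ x : M, φ m0 (LocalizedModule.mkLinearMap m0.asIdeal.primeCompl M x) = 0 := by
      intro x
      have h0 := hsum (v • x)
      have hterm : ∀ m ∈ T, m ≠ m0 →
          φ m (LocalizedModule.mkLinearMap m.asIdeal.primeCompl M (v • x)) = 0 := by
        intro m hm hne
        apply hP0
        rw [map_smul]
        have hvm : v ∈ m.asIdeal ^ e m := by
          have hle : (∏ m' ∈ T.erase m0, m'.asIdeal ^ e m') ≤ m.asIdeal ^ e m :=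
            le_trans Ideal.prod_le_inf
              (Finset.inf_le (Finset.mem_erase.2 ⟨hne, hm⟩))
          exact hle hv
        exact he m v hvm _
      rw [Finset.sum_eq_single_of_mem m0 hm0 (fun m hm hne => hterm m hm hne)] at h0
      -- now φ m0 (mk (v • x)) = 0 and v = 1 - u
      rw [map_smul] at h0
      have hvx : v • (LocalizedModule.mkLinearMap m0.asIdeal.primeCompl M x) =
          LocalizedModule.mkLinearMap m0.asIdeal.primeCompl M x -
          u • (LocalizedModule.mkLinearMap m0.asIdeal.primeCompl M x) := by
        have : (u + v) • (LocalizedModule.mkLinearMap m0.asIdeal.primeCompl M x) =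
            LocalizedModule.mkLinearMap m0.asIdeal.primeCompl M x := by rw [huv, one_smul]
        rw [add_smul] at this
        linear_combination (norm := module) this
      rw [hvx, map_sub] at h0
      have hu0 : φ m0 (u • LocalizedModule.mkLinearMap m0.asIdeal.primeCompl M x) = 0 :=
        hP0 m0 _ (he m0 u hu _)
      rw [hu0, sub_zero] at h0
      exact h0
    ext y
    obtain ⟨x, hx⟩ := hsur m0 y
    have : φ m0 (y - LocalizedModule.mkLinearMap m0.asIdeal.primeCompl M x) = 0 :=
      hP0 m0 _ hx
    rw [map_sub, hφmk x, sub_zero] at this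
    simpa using this
  · exact hsupp m0 hm0

end Aux4

section Aux5

variable {k : Type u} {A : Type v} [Field k] [CommRing A] [Algebra k A]

lemma aux_crt_data (J : Ideal A) (hfd : FiniteDimensional k (A ⧸ J)) :
    ∃ (T : Finset (MaximalSpectrum A)) (e : ℕ) (ε : MaximalSpectrum A → A),
      e ≠ 0 ∧
      (∀ m ∈ T, 1 - ε m ∈ m.asIdeal ^ e) ∧
      (∀ m ∈ T, ∀ m' ∈ T, m ≠ m' → ε m ∈ m'.asIdeal ^ e) ∧
      (T.inf fun m => m.asIdeal ^ e) ≤ J := by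
  classical
  haveI : IsArtinianRing (A ⧸ J) := isArtinian_of_tower k inferInstance
  haveI : IsNoetherianRing (A ⧸ J) := isNoetherian_of_tower k inferInstance
  obtain ⟨n, hn⟩ := IsNoetherianRing.isNilpotent_nilradical (A ⧸ J)
  set e := n + 1 with he
  set π := Ideal.Quotient.mk J with hπ
  have hπs : Function.Surjective π := Ideal.Quotient.mk_surjective
  -- the set of maximal ideals containing J is finite
  have hS : {m : MaximalSpectrum A | J ≤ m.asIdeal}.Finite := by
    have himg : ∀ m : MaximalSpectrum A, J ≤ m.asIdeal →
        (m.asIdeal.map π).IsMaximal ∧ (m.asIdeal.map π).comap π = m.asIdeal := by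
      intro m hm
      have hcm : (m.asIdeal.map π).comap π = m.asIdeal := by
        rw [Ideal.comap_map_of_surjective π hπs]
        rw [← RingHom.ker_eq_comap_bot, Ideal.mk_ker]
        exact sup_eq_left.2 hm
      rcases Ideal.map_eq_top_or_isMaximal_of_surjective π hπs m.2 with htop | hmax
      · exfalso
        apply m.2.ne_top
        rw [← hcm, htop, Ideal.comap_top]
      · exact ⟨hmax, hcm⟩
    apply Set.Finite.of_finite_image
      (f := fun m : MaximalSpectrum A => m.asIdeal.map π)
    · apply Set.Finite.subset (IsArtinianRing.setOfPred_isMaximal_finite (A ⧸ J))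
      rintro _ ⟨m, hm, rfl⟩
      exact (himg m hm).1
    · intro m hm m' hm' hEq
      apply MaximalSpectrum.ext
      rw [← (himg m hm).2, ← (himg m' hm').2]
      exact congrArg (Ideal.comap π) hEq
  -- product of the e-th powers is contained in J
  have hprod : (∏ m ∈ hS.toFinset, m.asIdeal ^ e) ≤ J := by
    have hK : Ideal.map π (∏ m ∈ hS.toFinset, m.asIdeal) ≤ nilradical (A ⧸ J) := by
      rw [nilradical_eq_sInf]
      refine le_sInf ?_
      rintro q hq
      haveI : q.IsPrime := hq
      haveI : q.IsMaximal := IsArtinianRing.isMaximal_of_isPrime q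
      have hcq : (q.comap π).IsMaximal := Ideal.comap_isMaximal_of_surjective π hπs
      have hJq : J ≤ q.comap π := by
        intro x hx
        show π x ∈ q
        have hx0 : π x = 0 := Ideal.Quotient.eq_zero_iff_mem.2 hx
        rw [hx0]
        exact q.zero_mem
      have hmem : (⟨q.comap π, hcq⟩ : MaximalSpectrum A) ∈ hS.toFinset := by
        rw [Set.Finite.mem_toFinset]; exact hJq
      have hle : (∏ m ∈ hS.toFinset, m.asIdeal) ≤ q.comap π :=
        le_trans Ideal.prod_le_inf (Finset.inf_le hmem)
      calc Ideal.map π (∏ m ∈ hS.toFinset, m.asIdeal)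
          ≤ Ideal.map π (q.comap π) := Ideal.map_mono hle
        _ ≤ q := Ideal.map_comap_le
    have h2 : Ideal.map π ((∏ m ∈ hS.toFinset, m.asIdeal) ^ e) ≤ ⊥ := by
      rw [Ideal.map_pow]
      calc (Ideal.map π (∏ m ∈ hS.toFinset, m.asIdeal)) ^ e
          ≤ (nilradical (A ⧸ J)) ^ e := Ideal.pow_right_mono hK e
        _ ≤ (nilradical (A ⧸ J)) ^ n := Ideal.pow_le_pow_right (Nat.le_succ n)
        _ = ⊥ := hn
    rw [Finset.prod_pow]
    rw [Ideal.map_le_iff_le_comap] at h2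
    refine le_trans h2 ?_
    intro x hx
    have : π x = 0 := hx
    exact Ideal.Quotient.eq_zero_iff_mem.1 this
  -- pairwise coprimality and the idempotent-like elements
  have hcop : ∀ m ∈ hS.toFinset, ∀ m' ∈ hS.toFinset, m ≠ m' →
      IsCoprime (m.asIdeal ^ e) (m'.asIdeal ^ e) := by
    intro m _ m' _ hne
    have hne' : m.asIdeal ≠ m'.asIdeal := fun hEq => hne (MaximalSpectrum.ext hEq)
    exact (Ideal.isCoprime_iff_sup_eq.2 (Ideal.IsMaximal.coprime_of_ne m.2 m'.2 hne')).pow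
  have hεex : ∀ m ∈ hS.toFinset, ∃ v : A,
      1 - v ∈ m.asIdeal ^ e ∧ ∀ m' ∈ hS.toFinset, m' ≠ m → v ∈ m'.asIdeal ^ e := by
    intro m hm
    have hc : IsCoprime (m.asIdeal ^ e) (∏ m' ∈ hS.toFinset.erase m, m'.asIdeal ^ e) := by
      refine IsCoprime.prod_right fun m' hm' => ?_
      exact hcop m hm m' (Finset.mem_erase.1 hm').2
        (fun hEq => (Finset.mem_erase.1 hm').1 hEq.symm)
    have hsup := Ideal.isCoprime_iff_sup_eq.1 hc
    obtain ⟨u, hu, v, hv, huv⟩ := Submodule.mem_sup.1 (hsup ▸ Submodule.mem_top :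
      (1 : A) ∈ m.asIdeal ^ e ⊔ ∏ m' ∈ hS.toFinset.erase m, m'.asIdeal ^ e)
    refine ⟨v, by rwa [← huv, add_sub_cancel_right], fun m' hm' hne => ?_⟩
    have hle : (∏ m'' ∈ hS.toFinset.erase m, m''.asIdeal ^ e) ≤ m'.asIdeal ^ e :=
      le_trans Ideal.prod_le_inf (Finset.inf_le (Finset.mem_erase.2 ⟨hne, hm'⟩))
    exact hle hv
  choose! ε hε1 hε2 using hεex
  exact ⟨hS.toFinset, e, ε, Nat.succ_ne_zero n, fun m hm => hε1 m hm,
    fun m hm m' hm' hne => hε2 m hm m' hm' (fun h => hne h.symm),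
    le_trans (aux_inf_le_prod hS.toFinset _ hcop) hprod⟩

end Aux5

section Aux6

variable {k : Type u} {A : Type v} [Field k] [CommRing A] [Algebra k A]
variable {M : Type v} [AddCommGroup M] [Module k M] [Module A M] [IsScalarTower k A M]

lemma aux_forward (ψ : M →ₗ[k] k) (hψ : MemFiniteDual (A := A) M ψ) :
    ∃ (T : Finset (MaximalSpectrum A))
      (φ : ∀ m : MaximalSpectrum A, LocalizedModule m.asIdeal.primeCompl M →ₗ[k] k),
      (∀ m ∉ T, φ m = 0) ∧
      (∀ m, MemFiniteDual (A := A) (LocalizedModule m.asIdeal.primeCompl M) (φ m)) ∧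
      ∀ x : M, (∑ m ∈ T, φ m (LocalizedModule.mkLinearMap m.asIdeal.primeCompl M x)) = ψ x := by
  classical
  obtain ⟨P, hP0, hPfd⟩ := hψ
  haveI : FiniteDimensional k (M ⧸ P) :=
    (Submodule.Quotient.restrictScalarsEquiv k P).finiteDimensional
  -- the ideal of elements of `A` acting trivially on `M ⧸ P`
  set ρ : A →ₐ[k] Module.End k (M ⧸ P) := Algebra.lsmul k k (M ⧸ P) with hρdef
  set J : Ideal A := RingHom.ker ρ with hJdef
  have hJ : ∀ a : A, a ∈ J ↔ ∀ q : M ⧸ P, a • q = 0 := by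
    intro a
    rw [hJdef, RingHom.mem_ker]
    constructor
    · intro h q
      have h2 : (ρ a) q = 0 := by rw [h]; rfl
      simpa [hρdef] using h2
    · intro h
      apply LinearMap.ext
      intro q
      simpa [hρdef] using h q
  haveI hfdAJ : FiniteDimensional k (A ⧸ J) := by
    haveI : FiniteDimensional k (Module.End k (M ⧸ P)) :=
      (inferInstance : FiniteDimensional k ((M ⧸ P) →ₗ[k] (M ⧸ P)))
    exact FiniteDimensional.of_injective (Ideal.kerLiftAlg ρ).toLinearMap
      (Ideal.kerLiftAlg_injective ρ)
  -- the functional induced on the quotient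
  set ψb : (M ⧸ P) →ₗ[k] k :=
    ((P.restrictScalars k).liftQ ψ
      (fun x hx => LinearMap.mem_ker.2 (hP0 x hx))).comp
      ((Submodule.Quotient.restrictScalarsEquiv k P).symm).toLinearMap with hψbdef
  have hψb : ∀ x : M, ψb (P.mkQ x) = ψ x := by
    intro x
    rw [hψbdef]
    simp only [LinearMap.coe_comp, Function.comp_apply, LinearEquiv.coe_toLinearMap,
      Submodule.mkQ_apply]
    rw [Submodule.Quotient.restrictScalarsEquiv_symm_mk, Submodule.liftQ_apply]
  obtain ⟨T, e, ε, he0, hε1, hε2, hinfJ⟩ := aux_crt_data (k := k) J hfdAJ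
  -- facts about the pieces
  have hmul_mem : ∀ m ∈ T, ∀ a ∈ m.asIdeal ^ e, a * ε m ∈ J := by
    intro m hm a ha
    apply hinfJ
    rw [Submodule.mem_finsetInf]
    intro m' hm'
    by_cases hEq : m' = m
    · subst hEq
      exact Ideal.mul_mem_right _ _ ha
    · exact Ideal.mul_mem_left _ _ (hε2 m hm m' hm' (fun h => hEq h.symm))
  have hkill : ∀ m ∈ T, ∀ a ∈ m.asIdeal ^ e, ∀ q : M ⧸ P, a • ε m • q = 0 := by
    intro m hm a ha q
    rw [← mul_smul]
    exact (hJ _).1 (hmul_mem m hm a ha) q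
  have hsum1 : ∀ q : M ⧸ P, (∑ m ∈ T, ε m) • q = q := by
    intro q
    have hmem : 1 - ∑ m ∈ T, ε m ∈ J := by
      apply hinfJ
      rw [Submodule.mem_finsetInf]
      intro m hm
      have hsplit : ∑ m' ∈ T, ε m' = ε m + ∑ m' ∈ T.erase m, ε m' :=
        (Finset.add_sum_erase T ε hm).symm
      rw [hsplit]
      have h1 : (1 : A) - (ε m + ∑ m' ∈ T.erase m, ε m') =
          (1 - ε m) - ∑ m' ∈ T.erase m, ε m' := by ring
      rw [h1]
      refine Submodule.sub_mem _ (hε1 m hm) (Ideal.sum_mem _ fun m' hm' => ?_)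
      exact hε2 m' (Finset.mem_of_mem_erase hm') m hm (Finset.ne_of_mem_erase hm')
    have h2 : (1 - ∑ m ∈ T, ε m) • q = 0 := (hJ _).1 hmem q
    rw [sub_smul, one_smul, sub_eq_zero] at h2
    exact h2.symm
  -- the submodules ε m • (M ⧸ P)
  set Nm : MaximalSpectrum A → Submodule A (M ⧸ P) :=
    fun m => LinearMap.range (Algebra.lsmul A A (M ⧸ P) (ε m)) with hNmdef
  haveI hNfd : ∀ m, FiniteDimensional k ↥(Nm m) := fun m =>
    ((Submodule.restrictScalarsEquiv k A (M ⧸ P) (Nm m)).restrictScalars k).finiteDimensional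
  have hinjN : ∀ m ∈ T, ∀ s ∈ m.asIdeal.primeCompl,
      ∀ y ∈ Nm m, s • y = 0 → y = 0 := by
    intro m hm s hs y hyN hy
    have hsup : Ideal.span {s} ⊔ m.asIdeal ^ e = ⊤ := by
      by_contra hne
      obtain ⟨m'', hm''max, hle⟩ := Ideal.exists_le_maximal _ hne
      haveI := hm''max.isPrime
      have h1 : m.asIdeal ≤ m'' :=
        (Ideal.IsPrime.pow_le_iff he0).1 (le_trans le_sup_right hle)
      have h2 : m.asIdeal = m'' := m.2.eq_of_le hm''max.ne_top h1
      exact hs (h2 ▸ (le_trans le_sup_left hle (Ideal.mem_span_singleton_self s)))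
    obtain ⟨u, hu, t, ht, hut⟩ := Submodule.mem_sup.1 (hsup ▸ Submodule.mem_top :
      (1 : A) ∈ Ideal.span {s} ⊔ m.asIdeal ^ e)
    obtain ⟨c, hcu⟩ := Ideal.mem_span_singleton'.1 hu
    obtain ⟨q, hq⟩ := hyN
    have hty : t • y = 0 := by
      rw [← hq]
      have : (Algebra.lsmul A A (M ⧸ P) (ε m)) q = ε m • q := rfl
      rw [this]
      exact hkill m hm t ht q
    have h3 : (u + t) • y = y := by rw [hut, one_smul]
    rw [add_smul, ← hcu, mul_smul, hy, smul_zero, zero_add, hty] at h3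
    exact h3.symm
  have hunit : ∀ m ∈ T, ∀ s : m.asIdeal.primeCompl,
      IsUnit (algebraMap A (Module.End A ↥(Nm m)) (s : A)) := by
    intro m hm s
    rw [Module.End.isUnit_iff]
    constructor
    · intro y z hyz
      have h1 : (s : A) • (y : M ⧸ P) = (s : A) • (z : M ⧸ P) := by
        have := congrArg Subtype.val hyz
        simpa [Module.algebraMap_end_apply] using this
      have h2 : (s : A) • ((y : M ⧸ P) - z) = 0 := by
        rw [smul_sub, h1, sub_self]
      have h3 := hinjN m hm s s.2 _ (Submodule.sub_mem _ y.2 z.2) h2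
      exact Subtype.ext (by rwa [sub_eq_zero] at h3)
    · -- surjectivity via finite dimensionality
      have hmem : ∀ x ∈ (Nm m).restrictScalars k,
          (Algebra.lsmul k k (M ⧸ P) (s : A)) x ∈ (Nm m).restrictScalars k := by
        intro x hx
        show (s : A) • x ∈ (Nm m).restrictScalars k
        exact Submodule.smul_mem (Nm m) (s : A) hx
      have τinj : Function.Injective
          ((Algebra.lsmul k k (M ⧸ P) (s : A)).restrict hmem) := by
        intro y z hyz
        have h1 : (s : A) • (y : M ⧸ P) = (s : A) • (z : M ⧸ P) :=
          congrArg Subtype.val hyz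
        have h2 : (s : A) • ((y : M ⧸ P) - z) = 0 := by
          rw [smul_sub, h1, sub_self]
        have h3 := hinjN m hm s s.2 _ (Submodule.sub_mem _ y.2 z.2) h2
        exact Subtype.ext (by rwa [sub_eq_zero] at h3)
      have τsurj := (LinearMap.injective_iff_surjective (K := k)
        (f := (Algebra.lsmul k k (M ⧸ P) (s : A)).restrict hmem)).1 τinj
      intro z
      obtain ⟨w, hw⟩ := τsurj ⟨(z : M ⧸ P), z.2⟩
      have h4 : (s : A) • (w : M ⧸ P) = (z : M ⧸ P) := congrArg Subtype.val hw
      refine ⟨⟨(w : M ⧸ P), w.2⟩, Subtype.ext ?_⟩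
      show (s : A) • (w : M ⧸ P) = (z : M ⧸ P)
      exact h4
  -- the maps into the pieces
  set f : ∀ m : MaximalSpectrum A, M →ₗ[A] ↥(Nm m) := fun m =>
    LinearMap.codRestrict (Nm m) ((Algebra.lsmul A A (M ⧸ P) (ε m)) ∘ₗ P.mkQ)
      (fun x => ⟨P.mkQ x, rfl⟩) with hfdef
  have hgex : ∀ m ∈ T, ∃ g : LocalizedModule m.asIdeal.primeCompl M →ₗ[A] ↥(Nm m),
      g ∘ₗ LocalizedModule.mkLinearMap m.asIdeal.primeCompl M = f m := fun m hm =>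
    ⟨LocalizedModule.lift _ (f m) (hunit m hm), LocalizedModule.lift_comp _ _ _⟩
  choose g hg using hgex
  refine ⟨T, fun m => if hm : m ∈ T then
      ψb ∘ₗ (((Nm m).subtype ∘ₗ g m hm).restrictScalars k) else 0, ?_, ?_, ?_⟩
  · intro m hm
    simp only [dif_neg hm]
  · intro m
    by_cases hm : m ∈ T
    · simp only [dif_pos hm]
      refine ⟨LinearMap.ker (g m hm), fun x hx => ?_, ?_⟩
      · simp only [LinearMap.coe_comp, Function.comp_apply, LinearMap.coe_restrictScalars,
          Submodule.coe_subtype]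
        rw [LinearMap.mem_ker.1 hx]
        simp
      · have hkerEq : (LinearMap.ker (g m hm)).restrictScalars k =
            LinearMap.ker ((g m hm).restrictScalars k) := rfl
        rw [hkerEq]
        have eqv := ((g m hm).restrictScalars k).quotKerEquivRange
        exact Module.Finite.equiv eqv.symm
    · simp only [dif_neg hm]
      exact MemFiniteDual.zero
  · intro x
    have hterm : ∀ m ∈ T, (if hm : m ∈ T then
        ψb ∘ₗ (((Nm m).subtype ∘ₗ g m hm).restrictScalars k) else 0)
          (LocalizedModule.mkLinearMap m.asIdeal.primeCompl M x) =
        ψb (ε m • P.mkQ x) := by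
      intro m hm
      simp only [dif_pos hm]
      simp only [LinearMap.coe_comp, Function.comp_apply, LinearMap.coe_restrictScalars,
        Submodule.coe_subtype]
      have h1 : g m hm (LocalizedModule.mkLinearMap m.asIdeal.primeCompl M x) = f m x :=
        LinearMap.congr_fun (hg m hm) x
      rw [h1, hfdef]
      rfl
    rw [Finset.sum_congr rfl hterm]
    rw [← map_sum]
    have h2 : ∑ m ∈ T, ε m • P.mkQ x = (∑ m ∈ T, ε m) • P.mkQ x :=
      (Finset.sum_smul).symm
    rw [h2, hsum1, hψb]

end Aux6


/-- For a finitely generated module `M` over a finitely generated commutative algebra `A` over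
a field `k`, the map `(φ_m)_m ↦ Σ_m φ_m ∘ λ_m` identifies the direct sum of the finite duals
of the localizations `M_m` at the maximal ideals of `A` with the finite dual `M°`, and this
identification is `A`-linear for the transposed actions. -/
theorem finiteDual_eq_directSum_localizations {k : Type u} {A : Type v} [Field k] [CommRing A]
    [Algebra k A] [Algebra.FiniteType k A] (M : Type v) [AddCommGroup M] [Module k M]
    [Module A M] [IsScalarTower k A M] [Module.Finite A M] :
    letI Loc : MaximalSpectrum A → Type v :=
      fun m => LocalizedModule m.asIdeal.primeCompl M
    letI lam : ∀ m : MaximalSpectrum A, M →ₗ[k] Loc m :=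
      fun m => (LocalizedModule.mkLinearMap m.asIdeal.primeCompl M).restrictScalars k
    letI Adm : (∀ m : MaximalSpectrum A, Loc m →ₗ[k] k) → Prop :=
      fun φ => {m | φ m ≠ 0}.Finite ∧
        ∀ m, MemFiniteDual (A := A) (Loc m) (φ m)
    letI F : (∀ m : MaximalSpectrum A, Loc m →ₗ[k] k) → (M →ₗ[k] k) :=
      fun φ => ∑ᶠ m, (φ m).comp (lam m)
    -- injectivity
    (∀ φ φ', Adm φ → Adm φ' → F φ = F φ' → φ = φ') ∧
    -- the image is exactly the finite dual `M°`
    (∀ ψ : M →ₗ[k] k, MemFiniteDual (A := A) M ψ ↔ ∃ φ, Adm φ ∧ F φ = ψ) ∧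
    -- `A`-linearity for the transposed actions
    (∀ φ, Adm φ → ∀ a : A, ∃ ψ, Adm ψ ∧ (∀ m x, ψ m x = φ m (a • x)) ∧
      ∀ x : M, F ψ x = F φ (a • x)) := by
  classical
  have Fsum : ∀ (φ : ∀ m : MaximalSpectrum A, LocalizedModule m.asIdeal.primeCompl M →ₗ[k] k)
      (T : Finset (MaximalSpectrum A)), (∀ m ∉ T, φ m = 0) →
      (∑ᶠ m : MaximalSpectrum A, (φ m).comp
        ((LocalizedModule.mkLinearMap m.asIdeal.primeCompl M).restrictScalars k)) =
      ∑ m ∈ T, (φ m).comp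
        ((LocalizedModule.mkLinearMap m.asIdeal.primeCompl M).restrictScalars k) := by
    intro φ T hT
    apply finsum_eq_sum_of_support_subset
    intro m hm
    by_contra hmT
    apply hm
    show (φ m).comp ((LocalizedModule.mkLinearMap m.asIdeal.primeCompl M).restrictScalars k) = 0
    rw [hT m hmT, LinearMap.zero_comp]
  refine ⟨?_, ?_, ?_⟩
  · -- injectivity
    intro φ φ' hφ hφ' hF
    funext m0
    have hfin : ({m | φ m ≠ 0} ∪ {m | φ' m ≠ 0}).Finite := hφ.1.union hφ'.1
    set T := hfin.toFinset with hTdef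
    have hsupp : ∀ m ∉ T, φ m - φ' m = 0 := by
      intro m hm
      rw [hTdef, Set.Finite.mem_toFinset] at hm
      simp only [Set.mem_union, Set.mem_setOf_eq, not_or, not_not] at hm
      rw [hm.1, hm.2, sub_self]
    have hF' : (∑ᶠ m : MaximalSpectrum A, (φ m).comp
        ((LocalizedModule.mkLinearMap m.asIdeal.primeCompl M).restrictScalars k)) =
        ∑ᶠ m : MaximalSpectrum A, (φ' m).comp
        ((LocalizedModule.mkLinearMap m.asIdeal.primeCompl M).restrictScalars k) := hF
    rw [Fsum φ T (fun m hm => by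
        rw [hTdef, Set.Finite.mem_toFinset] at hm
        by_contra h
        exact hm (Or.inl h)),
      Fsum φ' T (fun m hm => by
        rw [hTdef, Set.Finite.mem_toFinset] at hm
        by_contra h
        exact hm (Or.inr h))] at hF'
    have hsum : ∀ x : M,
        ∑ m ∈ T, (φ m - φ' m) (LocalizedModule.mkLinearMap m.asIdeal.primeCompl M x) = 0 := by
      intro x
      have h3 := congrArg (fun f : M →ₗ[k] k => f x) hF'
      simp only [LinearMap.coe_sum, Finset.sum_apply, LinearMap.coe_comp,
        Function.comp_apply] at h3
      have h4 : ∀ m : MaximalSpectrum A,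
          (φ m - φ' m) (LocalizedModule.mkLinearMap m.asIdeal.primeCompl M x) =
          (φ m) ((LocalizedModule.mkLinearMap m.asIdeal.primeCompl M).restrictScalars k x) -
          (φ' m) ((LocalizedModule.mkLinearMap m.asIdeal.primeCompl M).restrictScalars k x) :=
        fun m => rfl
      rw [Finset.sum_congr rfl (fun m _ => h4 m), Finset.sum_sub_distrib, h3, sub_self]
    have hz := aux_core_inj (k := k) T (fun m => φ m - φ' m)
      (fun m => (hφ.2 m).sub (hφ'.2 m)) hsupp hsum m0
    rw [sub_eq_zero] at hz
    exact hz
  · -- image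
    intro ψ
    constructor
    · intro hψ
      obtain ⟨T, φ, h0, hfd, hsum⟩ := aux_forward (k := k) ψ hψ
      refine ⟨φ, ⟨?_, hfd⟩, ?_⟩
      · apply Set.Finite.subset T.finite_toSet
        intro m hm
        by_contra hmT
        exact hm (h0 m hmT)
      · show (∑ᶠ m : MaximalSpectrum A, (φ m).comp
          ((LocalizedModule.mkLinearMap m.asIdeal.primeCompl M).restrictScalars k)) = ψ
        rw [Fsum φ T h0]
        apply LinearMap.ext
        intro x
        simp only [LinearMap.coe_sum, Finset.sum_apply, LinearMap.coe_comp,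
          Function.comp_apply]
        exact hsum x
    · rintro ⟨φ, ⟨hfin, hfd⟩, rfl⟩
      show MemFiniteDual (A := A) M (∑ᶠ m : MaximalSpectrum A, (φ m).comp
        ((LocalizedModule.mkLinearMap m.asIdeal.primeCompl M).restrictScalars k))
      set T := hfin.toFinset with hTdef
      have h0 : ∀ m ∉ T, φ m = 0 := by
        intro m hm
        rw [hTdef, Set.Finite.mem_toFinset] at hm
        simpa using hm
      choose Pm hPm0 hPmfd using hfd
      refine ⟨T.inf fun m =>
        (Pm m).comap (LocalizedModule.mkLinearMap m.asIdeal.primeCompl M), ?_, ?_⟩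
      · intro x hx
        rw [Fsum φ T h0]
        simp only [LinearMap.coe_sum, Finset.sum_apply, LinearMap.coe_comp,
          Function.comp_apply]
        refine Finset.sum_eq_zero fun m hm => ?_
        apply hPm0
        exact Submodule.mem_finsetInf.1 hx m hm
      · have hEq : (T.inf fun m =>
            (Pm m).comap (LocalizedModule.mkLinearMap m.asIdeal.primeCompl M)).restrictScalars k
            = T.inf fun m => ((Pm m).restrictScalars k).comap
              ((LocalizedModule.mkLinearMap m.asIdeal.primeCompl M).restrictScalars k) := by
          ext x
          simp only [Submodule.restrictScalars_mem, Submodule.mem_finsetInf,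
            Submodule.mem_comap]
          rfl
        rw [hEq]
        apply aux_fd_finsetInf
        intro m hm
        exact aux_fd_comap
          ((LocalizedModule.mkLinearMap m.asIdeal.primeCompl M).restrictScalars k) _ (hPmfd m)
  · -- A-linearity
    intro φ hφ a
    refine ⟨fun m => (φ m).comp
      (Algebra.lsmul k k (LocalizedModule m.asIdeal.primeCompl M) a), ⟨?_, ?_⟩, ?_, ?_⟩
    · apply Set.Finite.subset hφ.1
      intro m hm
      simp only [Set.mem_setOf_eq] at hm ⊢
      intro h
      apply hm
      rw [h, LinearMap.zero_comp]
    · intro m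
      obtain ⟨P, hP0, hPfd⟩ := hφ.2 m
      refine ⟨P, fun x hx => ?_, hPfd⟩
      simp only [LinearMap.coe_comp, Function.comp_apply]
      exact hP0 _ (P.smul_mem a hx)
    · intro m x
      rfl
    · intro x
      show (∑ᶠ m : MaximalSpectrum A, ((φ m).comp
          (Algebra.lsmul k k (LocalizedModule m.asIdeal.primeCompl M) a)).comp
          ((LocalizedModule.mkLinearMap m.asIdeal.primeCompl M).restrictScalars k)) x =
        (∑ᶠ m : MaximalSpectrum A, (φ m).comp
          ((LocalizedModule.mkLinearMap m.asIdeal.primeCompl M).restrictScalars k)) (a • x)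
      set T := hφ.1.toFinset with hTdef
      have h0 : ∀ m ∉ T, φ m = 0 := by
        intro m hm
        rw [hTdef, Set.Finite.mem_toFinset] at hm
        simpa using hm
      have h0' : ∀ m ∉ T, ((φ m).comp
          (Algebra.lsmul k k (LocalizedModule m.asIdeal.primeCompl M) a)) = 0 := by
        intro m hm
        rw [h0 m hm, LinearMap.zero_comp]
      rw [Fsum _ T h0', Fsum φ T h0]
      simp only [LinearMap.coe_sum, Finset.sum_apply, LinearMap.coe_comp,
        Function.comp_apply]
      refine Finset.sum_congr rfl fun m hm => ?_
      congr 1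
      show a • (LocalizedModule.mkLinearMap m.asIdeal.primeCompl M x) =
        LocalizedModule.mkLinearMap m.asIdeal.primeCompl M (a • x)
      rw [map_smul]
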